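/- Let G be a graph, A ⊆ V(G), and d a positive integer. The number of equivalence classes of the d-neighbor equivalence relation over A is at most (d+1)^{mw(A)}, where mw(A) is the number of distinct neighborhoods N(v) ∩ (V(G)\A) over v ∈ A. -/

import Mathlib

/-- `X` and `Y` are `d`-neighbor equivalent over `A` in `G`. -/
def nequiv {V : Type*} [Fintype V] [DecidableEq V] (G : SimpleGraph V) [DecidableRel G.Adj]
    (d : ℕ) (A X Y : Finset V) : Prop :=
  ∀ u ∉ A, min d (G.neighborFinset u ∩ X).card = min d (G.neighborFinset u ∩ Y).card

/-- The `d`-neighbor equivalence relation on the power set of `A`. -/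
def necSetoid {V : Type*} [Fintype V] [DecidableEq V] (G : SimpleGraph V)
    [DecidableRel G.Adj] (d : ℕ) (A : Finset V) : Setoid {X : Finset V // X ⊆ A} where
  r X Y := nequiv G d A X.1 Y.1
  iseqv := ⟨fun _ _ _ => rfl, fun h u hu => (h u hu).symm,
    fun h1 h2 u hu => (h1 u hu).trans (h2 u hu)⟩

lemma min_add_left (d x y : ℕ) : min d (x + y) = min d (min d x + y) := by omega

lemma min_add_right (d x y : ℕ) : min d (x + y) = min d (x + min d y) := by omega

lemma min_sum_min {ι : Type*} [DecidableEq ι] (d : ℕ) (s : Finset ι) (f : ι → ℕ) :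
    min d (∑ i ∈ s, f i) = min d (∑ i ∈ s, min d (f i)) := by
  induction s using Finset.induction with
  | empty => simp
  | insert _ _ h ih =>
    rw [Finset.sum_insert h, Finset.sum_insert h, min_add_right, ih, ← min_add_right,
      min_add_left]

/-- nec_d(A) ≤ (d+1)^{mw(A)}: the number of `d`-neighbor equivalence classes over `A` is
at most `(d+1)` to the number of distinct neighborhoods `N(v) ∩ Ā`, `v ∈ A`. -/
theorem nec_le_pow_mw {V : Type*} [Fintype V] [DecidableEq V]
    (G : SimpleGraph V) [DecidableRel G.Adj] (d : ℕ) (hd : 0 < d) (A : Finset V) :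
    Nat.card (Quotient (necSetoid G d A)) ≤
      (d + 1) ^ (A.image (fun v => G.neighborFinset v \ A)).card := by
  classical
  set f : V → Finset V := fun v => G.neighborFinset v \ A with hf
  set S : Finset (Finset V) := A.image f with hS
  -- counting decomposition
  have hcard : ∀ u, u ∉ A → ∀ Z : Finset V, Z ⊆ A →
      (G.neighborFinset u ∩ Z).card
        = ∑ s ∈ S.filter (fun s => u ∈ s), (Z.filter (fun v => f v = s)).card := by
    intro u hu Z hZ
    rw [← Finset.card_biUnion]
    · congr 1
      ext v
      simp only [Finset.mem_inter, Finset.mem_biUnion, Finset.mem_filter,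
        SimpleGraph.mem_neighborFinset]
      constructor
      · rintro ⟨hadj, hvZ⟩
        refine ⟨f v, ⟨Finset.mem_image_of_mem f (hZ hvZ), ?_⟩, hvZ, rfl⟩
        simp only [hf, Finset.mem_sdiff, SimpleGraph.mem_neighborFinset]
        exact ⟨hadj.symm, hu⟩
      · rintro ⟨s, ⟨hsS, hus⟩, hvZ, rfl⟩
        simp only [hf, Finset.mem_sdiff, SimpleGraph.mem_neighborFinset] at hus
        exact ⟨hus.1.symm, hvZ⟩
    · intro s hs t ht hst
      refine Finset.disjoint_left.mpr fun v hv1 hv2 => ?_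
      simp only [Finset.mem_filter] at hv1 hv2
      exact hst (hv1.2 ▸ hv2.2)
  -- key: equal truncated class counts implies equivalence
  have key : ∀ X Y : {X : Finset V // X ⊆ A},
      (∀ s ∈ S, min d ((X.1.filter (fun v => f v = s)).card)
        = min d ((Y.1.filter (fun v => f v = s)).card)) →
      nequiv G d A X.1 Y.1 := by
    intro X Y h u hu
    rw [hcard u hu X.1 X.2, hcard u hu Y.1 Y.2]
    conv_lhs => rw [min_sum_min]
    conv_rhs => rw [min_sum_min]
    exact congrArg (min d) (Finset.sum_congr rfl fun s hs => h s (Finset.mem_filter.mp hs).1)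
  let g : {X : Finset V // X ⊆ A} → (S → Fin (d + 1)) :=
    fun X s => ⟨min d ((X.1.filter (fun v => f v = s.1)).card), by omega⟩
  have hg : Function.Injective (fun q : Quotient (necSetoid G d A) => g q.out) := by
    intro q q' hqq
    rw [← q.out_eq, ← q'.out_eq]
    refine Quotient.sound (key _ _ fun s hs => ?_)
    have := congrArg Fin.val (congrFun hqq ⟨s, hs⟩)
    simpa [g] using this
  calc Nat.card (Quotient (necSetoid G d A)) ≤ Nat.card (S → Fin (d + 1)) :=
        Nat.card_le_card_of_injective _ hg
    _ = (d + 1) ^ S.card := by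
        simp [Nat.card_eq_fintype_card, Fintype.card_fun, Fintype.card_coe]
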